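/- Let α > 0, let n ∈ ℕ with n ≥ 2, let ε ∈ (0,1), and let u_1, …, u_n be non-negative real numbers. Then 1 + αⁿ ∏_{i=1}^{n} u_i ≤ exp( α^{1+ε} (1+ε)^{-1} Σ_{i=1}^{n} u_i^{1+ε} ). -/

import Mathlib

/-- For `y ≥ 0` and `p ≥ 1`, `1 + y ^ p ≤ (1 + y) ^ p`. -/
lemma one_add_rpow_le_rpow_one_add (y p : ℝ) (hy : 0 ≤ y) (hp : 1 ≤ p) :
    1 + y ^ p ≤ (1 + y) ^ p := by
  have h := NNReal.add_rpow_le_rpow_add 1 (NNReal.mk y hy) hp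
  have := (NNReal.coe_le_coe).2 h
  simpa [NNReal.coe_rpow, NNReal.one_rpow] using this

/-- Let `α > 0`, `n ≥ 2`, `ε ∈ (0,1)`, and `u 0, …, u (n-1)` be
non-negative reals. Then
`1 + αⁿ ∏ i, u i ≤ exp (α^(1+ε) / (1+ε) * ∑ i, (u i)^(1+ε))`. -/
theorem product_bound_exp (α ε : ℝ) (n : ℕ) (u : ℕ → ℝ)
    (hα : 0 < α) (hn : 2 ≤ n) (hε0 : 0 < ε) (hε1 : ε < 1)
    (hu : ∀ i, 0 ≤ u i) :
    1 + α ^ n * ∏ i ∈ Finset.range n, u i ≤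
      Real.exp (α ^ (1 + ε) * (1 + ε)⁻¹ * ∑ i ∈ Finset.range n, u i ^ (1 + ε)) := by
  have hn0 : (0:ℝ) < n := by
    have : (2:ℝ) ≤ n := by exact_mod_cast hn
    linarith
  have hε' : (0:ℝ) < 1 + ε := by linarith
  set s := Finset.range n with hs
  have hau : ∀ i, 0 ≤ α * u i := fun i => mul_nonneg hα.le (hu i)
  -- rewrite the product
  have hP : α ^ n * ∏ i ∈ s, u i = ∏ i ∈ s, (α * u i) := by
    rw [Finset.prod_mul_distrib, Finset.prod_const, Finset.card_range]
  set y : ℝ := (∑ i ∈ s, (α * u i) ^ (1 + ε)) / n with hy_def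
  have hy : 0 ≤ y := by
    apply div_nonneg _ hn0.le
    exact Finset.sum_nonneg fun i _ => Real.rpow_nonneg (hau i) _
  set m : ℝ := n / (1 + ε) with hm_def
  have hm1 : 1 ≤ m := by
    rw [hm_def, le_div_iff₀ hε']
    have : (2:ℝ) ≤ n := by exact_mod_cast hn
    linarith
  -- AM-GM: ∏ (α u i) ≤ y ^ m
  have amgm : (∏ i ∈ s, (α * u i)) ^ ((1 + ε) / n) ≤ y := by
    have h := Real.geom_mean_le_arith_mean_weighted s (fun _ => 1 / (n:ℝ))
      (fun i => (α * u i) ^ (1 + ε))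
      (fun i _ => by positivity)
      (by rw [Finset.sum_const, Finset.card_range, nsmul_eq_mul]; field_simp)
      (fun i _ => Real.rpow_nonneg (hau i) _)
    calc (∏ i ∈ s, (α * u i)) ^ ((1 + ε) / n)
        = ∏ i ∈ s, ((α * u i) ^ (1 + ε)) ^ (1 / (n:ℝ)) := by
          rw [← Real.finset_prod_rpow s _ (fun i _ => hau i)]
          exact Finset.prod_congr rfl fun i _ => by
            rw [← Real.rpow_mul (hau i), mul_one_div]
      _ ≤ ∑ i ∈ s, (1 / (n:ℝ)) * (α * u i) ^ (1 + ε) := h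
      _ = y := by rw [hy_def, ← Finset.mul_sum]; ring
  have hprod_nonneg : 0 ≤ ∏ i ∈ s, (α * u i) := Finset.prod_nonneg fun i _ => hau i
  have hPm : ∏ i ∈ s, (α * u i) ≤ y ^ m := by
    have := Real.rpow_le_rpow (Real.rpow_nonneg hprod_nonneg _) amgm
      (by positivity : (0:ℝ) ≤ m)
    rwa [← Real.rpow_mul hprod_nonneg, div_mul_div_comm, mul_comm ((1:ℝ)+ε),
      div_self (by positivity), Real.rpow_one] at this
  -- the chain
  have key : 1 + y ^ m ≤ Real.exp (y * m) := by
    calc 1 + y ^ m ≤ (1 + y) ^ m := one_add_rpow_le_rpow_one_add y m hy hm1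
      _ ≤ (Real.exp y) ^ m := Real.rpow_le_rpow (by linarith) (by linarith [Real.add_one_le_exp y]) (by positivity)
      _ = Real.exp (y * m) := (Real.exp_mul y m).symm
  have hexp_eq : y * m = α ^ (1 + ε) * (1 + ε)⁻¹ * ∑ i ∈ s, u i ^ (1 + ε) := by
    have hsum : ∑ i ∈ s, (α * u i) ^ (1 + ε) = α ^ (1+ε) * ∑ i ∈ s, u i ^ (1 + ε) := by
      rw [Finset.mul_sum]
      exact Finset.sum_congr rfl fun i _ => Real.mul_rpow hα.le (hu i)
    rw [hy_def, hm_def, hsum]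
    field_simp
  rw [hP, ← hexp_eq]
  calc 1 + ∏ i ∈ s, (α * u i) ≤ 1 + y ^ m := by linarith [hPm]
    _ ≤ Real.exp (y * m) := key
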